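/- Let |ψ⟩ be a pure state on a tripartite finite-dimensional Hilbert space H_A ⊗ H_B ⊗ H_C with reduced density matrices ρ_{AB}, ρ_{BC}, ρ_A, ρ_C. Then for any positive integers m, n: Tr(ρ_{AB}^m ρ_{BC}^n |ψ⟩⟨ψ|) = Tr(ρ_C^m ρ_A^n |ψ⟩⟨ψ|), and this quantity is a nonnegative real number. -/

import Mathlib

open Matrix

noncomputable section

/-- Reduced density matrix on `A ⊗ B` of the pure state `ψ` on `A ⊗ B ⊗ C`. -/
def rhoAB {A B C : Type*} [Fintype C] (ψ : A × B × C → ℂ) : Matrix (A × B) (A × B) ℂ :=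
  fun p q => ∑ c, ψ (p.1, p.2, c) * star (ψ (q.1, q.2, c))

/-- Reduced density matrix on `B ⊗ C`. -/
def rhoBC {A B C : Type*} [Fintype A] (ψ : A × B × C → ℂ) : Matrix (B × C) (B × C) ℂ :=
  fun p q => ∑ a, ψ (a, p.1, p.2) * star (ψ (a, q.1, q.2))

/-- Reduced density matrix on `A`. -/
def rhoA {A B C : Type*} [Fintype B] [Fintype C] (ψ : A × B × C → ℂ) : Matrix A A ℂ :=
  fun a a' => ∑ b, ∑ c, ψ (a, b, c) * star (ψ (a', b, c))

/-- Reduced density matrix on `C`. -/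
def rhoC {A B C : Type*} [Fintype A] [Fintype B] (ψ : A × B × C → ℂ) : Matrix C C ℂ :=
  fun c c' => ∑ a, ∑ b, ψ (a, b, c) * star (ψ (a, b, c'))

/-- Extend an operator on `A ⊗ B` to `A ⊗ B ⊗ C` by tensoring with the identity on `C`. -/
def liftAB {A B C : Type*} [DecidableEq C] (M : Matrix (A × B) (A × B) ℂ) :
    Matrix (A × B × C) (A × B × C) ℂ :=
  fun p q => M (p.1, p.2.1) (q.1, q.2.1) * (if p.2.2 = q.2.2 then 1 else 0)

/-- Extend an operator on `B ⊗ C` to `A ⊗ B ⊗ C` by tensoring with the identity on `A`. -/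
def liftBC {A B C : Type*} [DecidableEq A] (M : Matrix (B × C) (B × C) ℂ) :
    Matrix (A × B × C) (A × B × C) ℂ :=
  fun p q => M p.2 q.2 * (if p.1 = q.1 then 1 else 0)

/-- Extend an operator on `A` to `A ⊗ B ⊗ C`. -/
def liftA {A B C : Type*} [DecidableEq B] [DecidableEq C] (M : Matrix A A ℂ) :
    Matrix (A × B × C) (A × B × C) ℂ :=
  fun p q => M p.1 q.1 * (if p.2 = q.2 then 1 else 0)

/-- Extend an operator on `C` to `A ⊗ B ⊗ C`. -/
def liftC {A B C : Type*} [DecidableEq A] [DecidableEq B] (M : Matrix C C ℂ) :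
    Matrix (A × B × C) (A × B × C) ℂ :=
  fun p q => M p.2.2 q.2.2 * (if (p.1, p.2.1) = (q.1, q.2.1) then 1 else 0)

end

set_option linter.unusedSectionVars false

section Aux
open Matrix
variable {A B C : Type*} [Fintype A] [Fintype B] [Fintype C]
    [DecidableEq A] [DecidableEq B] [DecidableEq C]

lemma trace_mul_vmv {I : Type*} [Fintype I] (M : Matrix I I ℂ) (x y : I → ℂ) :
    (M * vecMulVec x y).trace = y ⬝ᵥ (M *ᵥ x) := by
  simp only [trace, diag, mul_apply, vecMulVec_apply, dotProduct, mulVec, Finset.mul_sum]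
  refine Finset.sum_congr rfl fun p _ => Finset.sum_congr rfl fun q _ => by ring

lemma liftAB_mul (M N : Matrix (A × B) (A × B) ℂ) :
    liftAB (C := C) (M * N) = liftAB M * liftAB N := by
  ext ⟨a, b, c⟩ ⟨a', b', c'⟩
  simp [liftAB, mul_apply, Fintype.sum_prod_type, mul_ite, ite_mul, Finset.mul_sum, Finset.sum_mul]

lemma liftBC_mul (M N : Matrix (B × C) (B × C) ℂ) :
    liftBC (A := A) (M * N) = liftBC M * liftBC N := by
  ext ⟨a, b, c⟩ ⟨a', b', c'⟩
  simp [liftBC, mul_apply, Fintype.sum_prod_type, mul_ite, ite_mul, Finset.mul_sum, Finset.sum_mul]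

lemma liftA_mul (M N : Matrix A A ℂ) :
    liftA (B := B) (C := C) (M * N) = liftA M * liftA N := by
  ext ⟨a, b, c⟩ ⟨a', b', c'⟩
  simp [liftA, mul_apply, Fintype.sum_prod_type, mul_ite, ite_mul, Finset.mul_sum, Finset.sum_mul]

lemma liftC_mul (M N : Matrix C C ℂ) :
    liftC (A := A) (B := B) (M * N) = liftC M * liftC N := by
  ext ⟨a, b, c⟩ ⟨a', b', c'⟩
  simp [liftC, mul_apply, Fintype.sum_prod_type, mul_ite, ite_mul, Finset.mul_sum, Finset.sum_mul, ite_and, Finset.sum_ite_eq, Finset.sum_ite_eq',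
    Prod.ext_iff]

lemma liftAB_liftC_comm (M : Matrix (A × B) (A × B) ℂ) (N : Matrix C C ℂ) :
    liftAB M * liftC N = liftC N * liftAB M := by
  ext ⟨a, b, c⟩ ⟨a', b', c'⟩
  simp [liftAB, liftC, mul_apply, Fintype.sum_prod_type, mul_ite, ite_mul, ite_and,
    Finset.sum_ite_eq, Finset.sum_ite_eq', Prod.ext_iff, mul_comm]

lemma liftA_liftC_comm (M : Matrix A A ℂ) (N : Matrix C C ℂ) :
    liftA (B := B) M * liftC N = liftC N * liftA M := by
  ext ⟨a, b, c⟩ ⟨a', b', c'⟩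
  simp [liftA, liftC, mul_apply, Fintype.sum_prod_type, mul_ite, ite_mul, ite_and,
    Finset.sum_ite_eq, Finset.sum_ite_eq', Prod.ext_iff, mul_comm]

lemma liftBC_liftA_comm (M : Matrix (B × C) (B × C) ℂ) (N : Matrix A A ℂ) :
    liftBC M * liftA N = liftA N * liftBC M := by
  ext ⟨a, b, c⟩ ⟨a', b', c'⟩
  simp [liftBC, liftA, mul_apply, Fintype.sum_prod_type, mul_ite, ite_mul, ite_and,
    Finset.sum_ite_eq, Finset.sum_ite_eq', Prod.ext_iff, mul_comm]

lemma liftAB_ct (M : Matrix (A × B) (A × B) ℂ) :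
    (liftAB (C := C) M)ᴴ = liftAB Mᴴ := by
  ext ⟨a, b, c⟩ ⟨a', b', c'⟩
  by_cases h : c = c' <;> simp [liftAB, conjTranspose_apply, h] <;> tauto

lemma liftC_ct (M : Matrix C C ℂ) :
    (liftC (A := A) (B := B) M)ᴴ = liftC Mᴴ := by
  ext ⟨a, b, c⟩ ⟨a', b', c'⟩
  by_cases h1 : a = a' <;> by_cases h2 : b = b' <;>
    simp [liftC, conjTranspose_apply, h1, h2] <;> tauto

lemma liftA_ct (M : Matrix A A ℂ) :
    (liftA (B := B) (C := C) M)ᴴ = liftA Mᴴ := by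
  ext ⟨a, b, c⟩ ⟨a', b', c'⟩
  by_cases h1 : b = b' <;> by_cases h2 : c = c' <;>
    simp [liftA, conjTranspose_apply, h1, h2] <;> tauto

lemma rhoAB_herm (ψ : A × B × C → ℂ) : (rhoAB ψ)ᴴ = rhoAB ψ := by
  ext ⟨a, b⟩ ⟨a', b'⟩
  simp [rhoAB, conjTranspose_apply, mul_comm]

lemma rhoC_herm (ψ : A × B × C → ℂ) : (rhoC ψ)ᴴ = rhoC ψ := by
  ext c c'
  simp [rhoC, conjTranspose_apply, mul_comm]

lemma sum_rot {α β γ M : Type*} [Fintype α] [Fintype β] [Fintype γ] [AddCommMonoid M]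
    (f : α → β → γ → M) :
    ∑ x, ∑ y, ∑ z, f x y z = ∑ z, ∑ x, ∑ y, f x y z :=
  (Finset.sum_congr rfl fun _ _ => Finset.sum_comm).trans Finset.sum_comm

lemma keyAB (ψ : A × B × C → ℂ) :
    liftAB (rhoAB ψ) *ᵥ ψ = liftC (rhoC ψ) *ᵥ ψ := by
  funext ⟨a, b, c⟩
  simp only [mulVec, dotProduct, liftAB, liftC, rhoAB, rhoC, Fintype.sum_prod_type,
    mul_ite, ite_mul, one_mul, zero_mul, mul_one, mul_zero, ite_and,
    Finset.sum_ite_eq, Finset.sum_ite_eq', Finset.sum_mul, Finset.mul_sum, Prod.ext_iff]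
  simp only [Finset.mem_univ, if_true, Finset.sum_ite_irrel, Finset.sum_const_zero,
    Finset.sum_ite_eq, Finset.sum_ite_eq']
  rw [sum_rot]
  exact Finset.sum_congr rfl fun z _ => Finset.sum_congr rfl fun x _ =>
    Finset.sum_congr rfl fun y _ => by ring

lemma keyBC (ψ : A × B × C → ℂ) :
    liftBC (rhoBC ψ) *ᵥ ψ = liftA (rhoA ψ) *ᵥ ψ := by
  funext ⟨a, b, c⟩
  simp only [mulVec, dotProduct, liftBC, liftA, rhoBC, rhoA, Fintype.sum_prod_type,
    mul_ite, ite_mul, one_mul, zero_mul, mul_one, mul_zero, ite_and,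
    Finset.sum_ite_eq, Finset.sum_ite_eq', Finset.sum_mul, Finset.mul_sum, Prod.ext_iff]
  simp only [Finset.mem_univ, if_true, Finset.sum_ite_irrel, Finset.sum_const_zero,
    Finset.sum_ite_eq, Finset.sum_ite_eq']
  rw [sum_rot]
  exact Finset.sum_congr rfl fun z _ => Finset.sum_congr rfl fun x _ =>
    Finset.sum_congr rfl fun y _ => by ring

lemma liftAB_one : liftAB (1 : Matrix (A × B) (A × B) ℂ) = (1 : Matrix (A × B × C) _ ℂ) := by
  ext ⟨a, b, c⟩ ⟨a', b', c'⟩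
  by_cases h1 : a = a' <;> by_cases h2 : b = b' <;> by_cases h3 : c = c' <;>
    simp [liftAB, one_apply, Prod.ext_iff, h1, h2, h3]

lemma liftBC_one : liftBC (1 : Matrix (B × C) (B × C) ℂ) = (1 : Matrix (A × B × C) _ ℂ) := by
  ext ⟨a, b, c⟩ ⟨a', b', c'⟩
  by_cases h1 : a = a' <;> by_cases h2 : b = b' <;> by_cases h3 : c = c' <;>
    simp [liftBC, one_apply, Prod.ext_iff, h1, h2, h3]

lemma liftA_one : liftA (1 : Matrix A A ℂ) = (1 : Matrix (A × B × C) _ ℂ) := by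
  ext ⟨a, b, c⟩ ⟨a', b', c'⟩
  by_cases h1 : a = a' <;> by_cases h2 : b = b' <;> by_cases h3 : c = c' <;>
    simp [liftA, one_apply, Prod.ext_iff, h1, h2, h3]

lemma liftC_one : liftC (1 : Matrix C C ℂ) = (1 : Matrix (A × B × C) _ ℂ) := by
  ext ⟨a, b, c⟩ ⟨a', b', c'⟩
  by_cases h1 : a = a' <;> by_cases h2 : b = b' <;> by_cases h3 : c = c' <;>
    simp [liftC, one_apply, Prod.ext_iff, h1, h2, h3]

lemma liftAB_pow (M : Matrix (A × B) (A × B) ℂ) (k : ℕ) :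
    liftAB (C := C) (M ^ k) = liftAB M ^ k := by
  induction k with
  | zero => simpa using liftAB_one
  | succ k ih => rw [pow_succ, pow_succ, liftAB_mul, ih]

lemma liftBC_pow (M : Matrix (B × C) (B × C) ℂ) (k : ℕ) :
    liftBC (A := A) (M ^ k) = liftBC M ^ k := by
  induction k with
  | zero => simpa using liftBC_one
  | succ k ih => rw [pow_succ, pow_succ, liftBC_mul, ih]

lemma keyAB_pow (ψ : A × B × C → ℂ) (k : ℕ) :
    liftAB ((rhoAB ψ) ^ (k + 1)) *ᵥ ψ = liftC ((rhoC ψ) ^ (k + 1)) *ᵥ ψ := by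
  induction k with
  | zero => simpa using keyAB ψ
  | succ k ih =>
    have h1 : liftAB (C := C) ((rhoAB ψ) ^ (k + 1 + 1)) =
        liftAB (rhoAB ψ) * liftAB ((rhoAB ψ) ^ (k + 1)) := by
      rw [← liftAB_mul, ← pow_succ']
    have h2 : liftC (A := A) (B := B) ((rhoC ψ) ^ (k + 1 + 1)) =
        liftC (rhoC ψ) * liftC ((rhoC ψ) ^ (k + 1)) := by
      rw [← liftC_mul, ← pow_succ']
    rw [h1, h2, ← mulVec_mulVec, ← mulVec_mulVec, ih, mulVec_mulVec, liftAB_liftC_comm,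
      ← mulVec_mulVec, keyAB, mulVec_mulVec, mulVec_mulVec, ← liftC_mul, ← liftC_mul,
      ← pow_succ, ← pow_succ']

lemma keyBC_pow (ψ : A × B × C → ℂ) (k : ℕ) :
    liftBC ((rhoBC ψ) ^ (k + 1)) *ᵥ ψ = liftA ((rhoA ψ) ^ (k + 1)) *ᵥ ψ := by
  induction k with
  | zero => simpa using keyBC ψ
  | succ k ih =>
    have h1 : liftBC (A := A) ((rhoBC ψ) ^ (k + 1 + 1)) =
        liftBC (rhoBC ψ) * liftBC ((rhoBC ψ) ^ (k + 1)) := by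
      rw [← liftBC_mul, ← pow_succ']
    have h2 : liftA (B := B) (C := C) ((rhoA ψ) ^ (k + 1 + 1)) =
        liftA (rhoA ψ) * liftA ((rhoA ψ) ^ (k + 1)) := by
      rw [← liftA_mul, ← pow_succ']
    rw [h1, h2, ← mulVec_mulVec, ← mulVec_mulVec, ih, mulVec_mulVec, liftBC_liftA_comm,
      ← mulVec_mulVec, keyBC, mulVec_mulVec, mulVec_mulVec, ← liftA_mul, ← liftA_mul,
      ← pow_succ, ← pow_succ']

open scoped ComplexOrder

lemma rhoA_psd (ψ : A × B × C → ℂ) : (rhoA ψ).PosSemidef := by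
  have h : (Matrix.of fun bc a => star (ψ (a, bc.1, bc.2)) : Matrix (B × C) A ℂ)ᴴ *
      (Matrix.of fun bc a => star (ψ (a, bc.1, bc.2)) : Matrix (B × C) A ℂ) = rhoA ψ := by
    ext a a'
    simp [mul_apply, conjTranspose_apply, rhoA, Fintype.sum_prod_type]
  exact h ▸ posSemidef_conjTranspose_mul_self _

lemma rhoC_psd (ψ : A × B × C → ℂ) : (rhoC ψ).PosSemidef := by
  have h : (Matrix.of fun ab c => star (ψ (ab.1, ab.2, c)) : Matrix (A × B) C ℂ)ᴴ *
      (Matrix.of fun ab c => star (ψ (ab.1, ab.2, c)) : Matrix (A × B) C ℂ) = rhoC ψ := by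
    ext c c'
    simp [mul_apply, conjTranspose_apply, rhoC, Fintype.sum_prod_type]
  exact h ▸ posSemidef_conjTranspose_mul_self _

open scoped MatrixOrder Matrix.Norms.L2Operator in
theorem stmt13' {A B C : Type*} [Fintype A] [Fintype B] [Fintype C]
    [DecidableEq A] [DecidableEq B] [DecidableEq C]
    (ψ : A × B × C → ℂ) (hψ : ∑ p, Complex.normSq (ψ p) = 1)
    (m n : ℕ) (hm : 0 < m) (hn : 0 < n) :
    (liftAB ((rhoAB ψ) ^ m) * liftBC ((rhoBC ψ) ^ n) * vecMulVec ψ (star ψ)).trace =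
      (liftC ((rhoC ψ) ^ m) * liftA ((rhoA ψ) ^ n) * vecMulVec ψ (star ψ)).trace ∧
    ∃ r : ℝ, 0 ≤ r ∧
      (liftAB ((rhoAB ψ) ^ m) * liftBC ((rhoBC ψ) ^ n) * vecMulVec ψ (star ψ)).trace = (r : ℂ) := by
  obtain ⟨m', rfl⟩ : ∃ m', m = m' + 1 := ⟨m - 1, (Nat.succ_pred_eq_of_pos hm).symm⟩
  obtain ⟨n', rfl⟩ : ∃ n', n = n' + 1 := ⟨n - 1, (Nat.succ_pred_eq_of_pos hn).symm⟩
  have hXherm : (liftAB (C := C) ((rhoAB ψ) ^ (m' + 1)))ᴴ = liftAB ((rhoAB ψ) ^ (m' + 1)) := by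
    rw [liftAB_ct, conjTranspose_pow, rhoAB_herm]
  have hZherm : (liftC (A := A) (B := B) ((rhoC ψ) ^ (m' + 1)))ᴴ =
      liftC ((rhoC ψ) ^ (m' + 1)) := by
    rw [liftC_ct, conjTranspose_pow, rhoC_herm]
  have hswap : ∀ v, star ψ ⬝ᵥ (liftAB ((rhoAB ψ) ^ (m' + 1)) *ᵥ v) =
      star ψ ⬝ᵥ (liftC ((rhoC ψ) ^ (m' + 1)) *ᵥ v) := by
    intro v
    rw [dotProduct_mulVec, dotProduct_mulVec]
    have h := congrArg star (keyAB_pow ψ m')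
    rw [star_mulVec, star_mulVec, hXherm, hZherm] at h
    rw [h]
  have heq : (liftAB ((rhoAB ψ) ^ (m' + 1)) * liftBC ((rhoBC ψ) ^ (n' + 1)) *
        vecMulVec ψ (star ψ)).trace =
      (liftC ((rhoC ψ) ^ (m' + 1)) * liftA ((rhoA ψ) ^ (n' + 1)) *
        vecMulVec ψ (star ψ)).trace := by
    rw [trace_mul_vmv, trace_mul_vmv, ← mulVec_mulVec, ← mulVec_mulVec, keyBC_pow, hswap]
  refine ⟨heq, ?_⟩
  -- positivity
  have hCp : ((rhoC ψ) ^ (m' + 1)).PosSemidef := (rhoC_psd ψ).pow _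
  have hAp : ((rhoA ψ) ^ (n' + 1)).PosSemidef := (rhoA_psd ψ).pow _
  have hdecomp : (liftA (B := B) (CFC.sqrt ((rhoA ψ) ^ (n' + 1))) * liftC (CFC.sqrt ((rhoC ψ) ^ (m' + 1))))ᴴ *
        (liftA (CFC.sqrt ((rhoA ψ) ^ (n' + 1))) * liftC (CFC.sqrt ((rhoC ψ) ^ (m' + 1)))) =
      liftC ((rhoC ψ) ^ (m' + 1)) * liftA ((rhoA ψ) ^ (n' + 1)) := by
    rw [conjTranspose_mul, liftA_ct, liftC_ct, (CFC.sqrt_nonneg ((rhoC ψ) ^ (m' + 1))).posSemidef.1, (CFC.sqrt_nonneg ((rhoA ψ) ^ (n' + 1))).posSemidef.1,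
      Matrix.mul_assoc, ← Matrix.mul_assoc (liftA (CFC.sqrt ((rhoA ψ) ^ (n' + 1)))), ← liftA_mul, CFC.sqrt_mul_sqrt_self _ hAp.nonneg,
      liftA_liftC_comm, ← Matrix.mul_assoc, ← liftC_mul, CFC.sqrt_mul_sqrt_self _ hCp.nonneg]
  have hK : (liftC (A := A) (B := B) ((rhoC ψ) ^ (m' + 1)) *
      liftA ((rhoA ψ) ^ (n' + 1))).PosSemidef :=
    hdecomp ▸ posSemidef_conjTranspose_mul_self _
  set K := liftC (A := A) (B := B) ((rhoC ψ) ^ (m' + 1)) * liftA ((rhoA ψ) ^ (n' + 1)) with hKdef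
  set z := star ψ ⬝ᵥ (K *ᵥ ψ) with hz
  have hzre : z = (z.re : ℂ) := by
    have hstar : star z = z := by
      rw [hz, ← star_dotProduct_star, star_star, star_mulVec, hK.1, ← dotProduct_mulVec]
    have hstar' : (starRingEnd ℂ) z = z := hstar
    exact (Complex.conj_eq_iff_re.mp hstar').symm
  refine ⟨z.re, ?_, ?_⟩
  · have := hK.re_dotProduct_nonneg ψ
    simpa [hz] using this
  · rw [heq, trace_mul_vmv, ← hz]
    exact hzre

end Aux

/-- For a pure state `ψ` on a tripartite finite-dimensional Hilbert space and any positive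
integers `m`, `n`: `Tr(ρ_{AB}^m ρ_{BC}^n |ψ⟩⟨ψ|) = Tr(ρ_C^m ρ_A^n |ψ⟩⟨ψ|)`, and this quantity
is a nonnegative real number. -/
theorem stmt13 {A B C : Type*} [Fintype A] [Fintype B] [Fintype C]
    [DecidableEq A] [DecidableEq B] [DecidableEq C]
    (ψ : A × B × C → ℂ) (hψ : ∑ p, Complex.normSq (ψ p) = 1)
    (m n : ℕ) (hm : 0 < m) (hn : 0 < n) :
    (liftAB ((rhoAB ψ) ^ m) * liftBC ((rhoBC ψ) ^ n) * vecMulVec ψ (star ψ)).trace =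
      (liftC ((rhoC ψ) ^ m) * liftA ((rhoA ψ) ^ n) * vecMulVec ψ (star ψ)).trace ∧
    ∃ r : ℝ, 0 ≤ r ∧
      (liftAB ((rhoAB ψ) ^ m) * liftBC ((rhoBC ψ) ^ n) * vecMulVec ψ (star ψ)).trace = (r : ℂ) := by
  exact stmt13' ψ hψ m n hm hn
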